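/- Let L_1, …, L_N be finitely many affine lines (translates of 1-dimensional linear subspaces) in ℝ². Then the complement ℝ² ∖ (L_1 ∪ ⋯ ∪ L_N) has at most N(N−1)/2 + N + 1 connected components. -/

import Mathlib

namespace Stmt11

/-- sign pattern for affine functions on ℝ -/
def Pat1 {m : ℕ} (a b : Fin m → ℝ) (σ : Fin m → Bool) (t : ℝ) : Prop :=
  ∀ k, if σ k then 0 < a k * t + b k else a k * t + b k < 0

/-- sign pattern for affine functions on ℝ² -/
def Pat2 {m : ℕ} (A B C : Fin m → ℝ) (σ : Fin m → Bool) (x : ℝ × ℝ) : Prop :=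
  ∀ k, if σ k then 0 < A k * x.1 + B k * x.2 + C k
       else A k * x.1 + B k * x.2 + C k < 0

open Classical in
noncomputable def Feas1 {m : ℕ} (a b : Fin m → ℝ) : Finset (Fin m → Bool) :=
  Finset.univ.filter fun σ => ∃ t, Pat1 a b σ t

open Classical in
noncomputable def Feas2 {m : ℕ} (A B C : Fin m → ℝ) : Finset (Fin m → Bool) :=
  Finset.univ.filter fun σ => ∃ x, Pat2 A B C σ x

lemma mem_Feas1 {m} {a b : Fin m → ℝ} {σ} : σ ∈ Feas1 a b ↔ ∃ t, Pat1 a b σ t := by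
  classical simp [Feas1]

lemma mem_Feas2 {m} {A B C : Fin m → ℝ} {σ} :
    σ ∈ Feas2 A B C ↔ ∃ x, Pat2 A B C σ x := by
  classical simp [Feas2]


lemma combo_pos {p q lam : ℝ} (hp : 0 < p) (hq : 0 < q) (h0 : 0 ≤ lam) (h1 : lam ≤ 1) :
    0 < lam * p + (1 - lam) * q := by
  rcases h0.eq_or_lt with h | h
  · rw [← h]; ring_nf; linarith
  · nlinarith [mul_pos h hp, mul_nonneg (sub_nonneg.2 h1) hq.le]

lemma combo_neg {p q lam : ℝ} (hp : p < 0) (hq : q < 0) (h0 : 0 ≤ lam) (h1 : lam ≤ 1) :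
    lam * p + (1 - lam) * q < 0 := by
  have := combo_pos (neg_pos.2 hp) (neg_pos.2 hq) h0 h1
  nlinarith

lemma pat1_interp {m} {a b : Fin m → ℝ} {σ} {t₁ t₂ lam : ℝ}
    (h₁ : Pat1 a b σ t₁) (h₂ : Pat1 a b σ t₂) (h0 : 0 ≤ lam) (h1 : lam ≤ 1) :
    Pat1 a b σ (lam * t₁ + (1 - lam) * t₂) := by
  intro k
  have e : a k * (lam * t₁ + (1 - lam) * t₂) + b k
      = lam * (a k * t₁ + b k) + (1 - lam) * (a k * t₂ + b k) := by ring
  have h₁ := h₁ k; have h₂ := h₂ k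
  cases hσ : σ k <;> simp only [hσ] at h₁ h₂ <;> simp only [hσ, if_true, if_false,
    Bool.false_eq_true, e]
  · exact combo_neg h₁ h₂ h0 h1
  · exact combo_pos h₁ h₂ h0 h1

lemma pat2_interp {m} {A B C : Fin m → ℝ} {σ} {x₁ x₂ : ℝ × ℝ} {lam : ℝ}
    (h₁ : Pat2 A B C σ x₁) (h₂ : Pat2 A B C σ x₂) (h0 : 0 ≤ lam) (h1 : lam ≤ 1) :
    Pat2 A B C σ (lam * x₁.1 + (1 - lam) * x₂.1, lam * x₁.2 + (1 - lam) * x₂.2) := by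
  intro k
  have e : A k * (lam * x₁.1 + (1 - lam) * x₂.1) + B k * (lam * x₁.2 + (1 - lam) * x₂.2) + C k
      = lam * (A k * x₁.1 + B k * x₁.2 + C k)
        + (1 - lam) * (A k * x₂.1 + B k * x₂.2 + C k) := by ring
  have h₁ := h₁ k; have h₂ := h₂ k
  cases hσ : σ k <;> simp only [hσ] at h₁ h₂ <;> simp only [hσ, if_true, if_false,
    Bool.false_eq_true, e]
  · exact combo_neg h₁ h₂ h0 h1
  · exact combo_pos h₁ h₂ h0 h1

lemma pat1_init {n : ℕ} {a b : Fin (n+1) → ℝ} {σ : Fin (n+1) → Bool} {t : ℝ}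
    (h : Pat1 a b σ t) : Pat1 (Fin.init a) (Fin.init b) (Fin.init σ) t := by
  intro k; exact h k.castSucc

lemma pat1_unique {m : ℕ} {a b : Fin m → ℝ} {τ₁ τ₂ : Fin m → Bool} {t : ℝ}
    (h₁ : Pat1 a b τ₁ t) (h₂ : Pat1 a b τ₂ t) : τ₁ = τ₂ := by
  funext k; have h₁ := h₁ k; have h₂ := h₂ k
  cases e₁ : τ₁ k <;> cases e₂ : τ₂ k <;> simp_all <;> linarith

lemma split1 {n : ℕ} {a b : Fin (n+1) → ℝ} {τ : Fin n → Bool} {tp tn : ℝ}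
    (hp : Pat1 (Fin.init a) (Fin.init b) τ tp) (hn : Pat1 (Fin.init a) (Fin.init b) τ tn)
    (hpp : 0 < a (Fin.last n) * tp + b (Fin.last n))
    (hnn : a (Fin.last n) * tn + b (Fin.last n) < 0) :
    Pat1 (Fin.init a) (Fin.init b) τ (-(b (Fin.last n)) / a (Fin.last n)) := by
  set al := a (Fin.last n) with hal
  set bl := b (Fin.last n) with hbl
  have ha : al ≠ 0 := by
    rintro h; rw [h] at hpp hnn; simp at hpp hnn; linarith
  have hd : 0 < (al * tp + bl) - (al * tn + bl) := by linarith
  set lam := -(al * tn + bl) / ((al * tp + bl) - (al * tn + bl)) with hlam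
  have h0 : 0 ≤ lam := by
    apply div_nonneg <;> linarith
  have h1 : lam ≤ 1 := by
    rw [hlam, div_le_one hd]; linarith
  have hpat := pat1_interp hp hn h0 h1
  have hstep : lam * ((al * tp + bl) - (al * tn + bl)) = -(al * tn + bl) := by
    rw [hlam]; exact div_mul_cancel₀ _ (ne_of_gt hd)
  have hzero : al * (lam * tp + (1 - lam) * tn) + bl = 0 := by
    have e1 : al * (lam * tp + (1 - lam) * tn) + bl
        = lam * (al * tp + bl) + (1 - lam) * (al * tn + bl) := by ring
    rw [e1]; linear_combination hstep
  have heq : lam * tp + (1 - lam) * tn = -bl / al := by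
    field_simp
    linarith [hzero]
  rwa [heq] at hpat

lemma mem_image_pos {n : ℕ} {a b : Fin (n+1) → ℝ} {τ : Fin n → Bool} {v : Bool}
    (h : τ ∈ ((Feas1 a b).filter (fun σ => σ (Fin.last n) = v)).image Fin.init) :
    ∃ t, Pat1 (Fin.init a) (Fin.init b) τ t ∧
      (if v then 0 < a (Fin.last n) * t + b (Fin.last n)
       else a (Fin.last n) * t + b (Fin.last n) < 0) := by
  classical
  simp only [Finset.mem_image, Finset.mem_filter] at h
  obtain ⟨σ, ⟨hσ, hlast⟩, rfl⟩ := h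
  obtain ⟨t, ht⟩ := mem_Feas1.1 hσ
  refine ⟨t, pat1_init ht, ?_⟩
  have := ht (Fin.last n); rw [hlast] at this; exact this

theorem feas1_card {m : ℕ} (a b : Fin m → ℝ) : (Feas1 a b).card ≤ m + 1 := by
  classical
  induction m with
  | zero =>
    calc (Feas1 a b).card ≤ Fintype.card (Fin 0 → Bool) := Finset.card_le_univ _
    _ ≤ 1 := by simp
  | succ n ih =>
    set F := Feas1 a b with hF
    set Sp := F.filter (fun σ => σ (Fin.last n) = true) with hSp
    set Sn := F.filter (fun σ => σ (Fin.last n) = false) with hSn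
    set Tp := Sp.image Fin.init with hTp
    set Tn := Sn.image Fin.init with hTn
    have hneg : Finset.filter (fun σ => ¬σ (Fin.last n) = true) F = Sn := by
      rw [hSn]; apply Finset.filter_congr; intro σ _
      simp [Bool.not_eq_true]
    have hsplit : F.card = Sp.card + Sn.card := by
      rw [hSp, ← hneg]
      exact (Finset.card_filter_add_card_filter_not
        (p := fun σ : Fin (n+1) → Bool => σ (Fin.last n) = true)).symm
    have hinj : ∀ (v : Bool) (s : Finset (Fin (n+1) → Bool)),
        (∀ σ ∈ s, σ (Fin.last n) = v) → (s.image Fin.init).card = s.card := by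
      intro v s hs
      apply Finset.card_image_of_injOn
      intro σ hσ σ' hσ' hee
      have : Fin.snoc (Fin.init σ) (σ (Fin.last n)) = σ := Fin.snoc_init_self σ
      rw [← Fin.snoc_init_self σ, ← Fin.snoc_init_self σ', hee, hs σ hσ, hs σ' hσ']
    have hcp : Tp.card = Sp.card := hinj true Sp (by intro σ hσ; exact (Finset.mem_filter.1 hσ).2)
    have hcn : Tn.card = Sn.card := hinj false Sn (by intro σ hσ; exact (Finset.mem_filter.1 hσ).2)
    have hsub : Tp ∪ Tn ⊆ Feas1 (Fin.init a) (Fin.init b) := by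
      intro τ hτ
      rcases Finset.mem_union.1 hτ with h | h
      · obtain ⟨t, ht, -⟩ := mem_image_pos h; exact mem_Feas1.2 ⟨t, ht⟩
      · obtain ⟨t, ht, -⟩ := mem_image_pos h; exact mem_Feas1.2 ⟨t, ht⟩
    have hint : (Tp ∩ Tn).card ≤ 1 := by
      apply Finset.card_le_one.2
      intro τ₁ h₁ τ₂ h₂
      obtain ⟨tp₁, hp₁, hpp₁⟩ := mem_image_pos (Finset.mem_of_mem_inter_left h₁)
      obtain ⟨tn₁, hn₁, hnn₁⟩ := mem_image_pos (Finset.mem_of_mem_inter_right h₁)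
      obtain ⟨tp₂, hp₂, hpp₂⟩ := mem_image_pos (Finset.mem_of_mem_inter_left h₂)
      obtain ⟨tn₂, hn₂, hnn₂⟩ := mem_image_pos (Finset.mem_of_mem_inter_right h₂)
      simp only [if_true, Bool.false_eq_true, if_false] at hpp₁ hnn₁ hpp₂ hnn₂
      exact pat1_unique (split1 hp₁ hn₁ hpp₁ hnn₁) (split1 hp₂ hn₂ hpp₂ hnn₂)
    have hu : (Tp ∪ Tn).card ≤ n + 1 :=
      le_trans (Finset.card_le_card hsub) (ih (Fin.init a) (Fin.init b))
    have : Tp.card + Tn.card = (Tp ∪ Tn).card + (Tp ∩ Tn).card :=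
      (Finset.card_union_add_card_inter Tp Tn).symm
    omega

lemma pat2_init {n : ℕ} {A B C : Fin (n+1) → ℝ} {σ : Fin (n+1) → Bool} {x : ℝ × ℝ}
    (h : Pat2 A B C σ x) : Pat2 (Fin.init A) (Fin.init B) (Fin.init C) (Fin.init σ) x := by
  intro k; exact h k.castSucc

lemma split2 {n : ℕ} {A B C : Fin (n+1) → ℝ} {τ : Fin n → Bool} {xp xn : ℝ × ℝ}
    (hp : Pat2 (Fin.init A) (Fin.init B) (Fin.init C) τ xp)
    (hn : Pat2 (Fin.init A) (Fin.init B) (Fin.init C) τ xn)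
    (hpp : 0 < A (Fin.last n) * xp.1 + B (Fin.last n) * xp.2 + C (Fin.last n))
    (hnn : A (Fin.last n) * xn.1 + B (Fin.last n) * xn.2 + C (Fin.last n) < 0) :
    ∃ x : ℝ × ℝ, Pat2 (Fin.init A) (Fin.init B) (Fin.init C) τ x ∧
      A (Fin.last n) * x.1 + B (Fin.last n) * x.2 + C (Fin.last n) = 0 := by
  set Al := A (Fin.last n)
  set Bl := B (Fin.last n)
  set Cl := C (Fin.last n)
  set p := Al * xp.1 + Bl * xp.2 + Cl with hpdef
  set q := Al * xn.1 + Bl * xn.2 + Cl with hqdef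
  have hd : 0 < p - q := by linarith
  set lam := -q / (p - q) with hlam
  have h0 : 0 ≤ lam := by apply div_nonneg <;> linarith
  have h1 : lam ≤ 1 := by rw [hlam, div_le_one hd]; linarith
  refine ⟨(lam * xp.1 + (1 - lam) * xn.1, lam * xp.2 + (1 - lam) * xn.2),
    pat2_interp hp hn h0 h1, ?_⟩
  have hstep : lam * (p - q) = -q := by
    rw [hlam]; exact div_mul_cancel₀ _ (ne_of_gt hd)
  have e1 : Al * (lam * xp.1 + (1 - lam) * xn.1) + Bl * (lam * xp.2 + (1 - lam) * xn.2) + Cl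
      = lam * p + (1 - lam) * q := by rw [hpdef, hqdef]; ring
  rw [e1]; linear_combination hstep

lemma pat2_unique {m : ℕ} {A B C : Fin m → ℝ} {τ₁ τ₂ : Fin m → Bool} {x : ℝ × ℝ}
    (h₁ : Pat2 A B C τ₁ x) (h₂ : Pat2 A B C τ₂ x) : τ₁ = τ₂ := by
  funext k; have h₁ := h₁ k; have h₂ := h₂ k
  cases e₁ : τ₁ k <;> cases e₂ : τ₂ k <;> simp_all <;> linarith

lemma mem_image_pos2 {n : ℕ} {A B C : Fin (n+1) → ℝ} {τ : Fin n → Bool} {v : Bool}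
    (h : τ ∈ ((Feas2 A B C).filter (fun σ => σ (Fin.last n) = v)).image Fin.init) :
    ∃ x : ℝ × ℝ, Pat2 (Fin.init A) (Fin.init B) (Fin.init C) τ x ∧
      (if v then 0 < A (Fin.last n) * x.1 + B (Fin.last n) * x.2 + C (Fin.last n)
       else A (Fin.last n) * x.1 + B (Fin.last n) * x.2 + C (Fin.last n) < 0) := by
  classical
  simp only [Finset.mem_image, Finset.mem_filter] at h
  obtain ⟨σ, ⟨hσ, hlast⟩, rfl⟩ := h
  obtain ⟨x, hx⟩ := mem_Feas2.1 hσ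
  refine ⟨x, pat2_init hx, ?_⟩
  have := hx (Fin.last n); rw [hlast] at this; exact this

lemma tri_step (n : ℕ) : n * (n - 1) / 2 + n + 1 + (n + 1) = (n + 1) * n / 2 + (n + 1) + 1 := by
  have h1 : n * (n - 1) / 2 = n.choose 2 := (Nat.choose_two_right n).symm
  have h2 : (n + 1) * n / 2 = (n + 1).choose 2 := by
    rw [Nat.choose_two_right]; simp
  have h3 : (n + 1).choose 2 = n.choose 1 + n.choose 2 := Nat.choose_succ_succ n 1
  have h4 : n.choose 1 = n := Nat.choose_one_right n
  omega

theorem feas2_card {m : ℕ} (A B C : Fin m → ℝ) :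
    (Feas2 A B C).card ≤ m * (m - 1) / 2 + m + 1 := by
  classical
  induction m with
  | zero =>
    calc (Feas2 A B C).card ≤ Fintype.card (Fin 0 → Bool) := Finset.card_le_univ _
    _ ≤ 1 := by simp
  | succ n ih =>
    set F := Feas2 A B C with hF
    set Sp := F.filter (fun σ => σ (Fin.last n) = true) with hSp
    set Sn := F.filter (fun σ => σ (Fin.last n) = false) with hSn
    set Tp := Sp.image Fin.init with hTp
    set Tn := Sn.image Fin.init with hTn
    have hneg : Finset.filter (fun σ => ¬σ (Fin.last n) = true) F = Sn := by
      rw [hSn]; apply Finset.filter_congr; intro σ _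
      simp [Bool.not_eq_true]
    have hsplit : F.card = Sp.card + Sn.card := by
      rw [hSp, ← hneg]
      exact (Finset.card_filter_add_card_filter_not
        (p := fun σ : Fin (n+1) → Bool => σ (Fin.last n) = true)).symm
    have hinj : ∀ (v : Bool) (s : Finset (Fin (n+1) → Bool)),
        (∀ σ ∈ s, σ (Fin.last n) = v) → (s.image Fin.init).card = s.card := by
      intro v s hs
      apply Finset.card_image_of_injOn
      intro σ hσ σ' hσ' hee
      rw [← Fin.snoc_init_self σ, ← Fin.snoc_init_self σ', hee, hs σ hσ, hs σ' hσ']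
    have hcp : Tp.card = Sp.card := hinj true Sp (by intro σ hσ; exact (Finset.mem_filter.1 hσ).2)
    have hcn : Tn.card = Sn.card := hinj false Sn (by intro σ hσ; exact (Finset.mem_filter.1 hσ).2)
    have hsub : Tp ∪ Tn ⊆ Feas2 (Fin.init A) (Fin.init B) (Fin.init C) := by
      intro τ hτ
      rcases Finset.mem_union.1 hτ with h | h
      · obtain ⟨x, hx, -⟩ := mem_image_pos2 h; exact mem_Feas2.2 ⟨x, hx⟩
      · obtain ⟨x, hx, -⟩ := mem_image_pos2 h; exact mem_Feas2.2 ⟨x, hx⟩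
    have hint : (Tp ∩ Tn).card ≤ n + 1 := by
      set Al := A (Fin.last n) with hAl
      set Bl := B (Fin.last n) with hBl
      set Cl := C (Fin.last n) with hCl
      by_cases hAB : Al = 0 ∧ Bl = 0
      · have : Tp ∩ Tn = ∅ := by
          apply Finset.eq_empty_of_forall_notMem
          intro τ hτ
          obtain ⟨xp, -, hpp⟩ := mem_image_pos2 (Finset.mem_of_mem_inter_left hτ)
          obtain ⟨xn, -, hnn⟩ := mem_image_pos2 (Finset.mem_of_mem_inter_right hτ)
          simp only [if_true, Bool.false_eq_true, if_false, ← hAl, ← hBl, ← hCl] at hpp hnn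
          rw [hAB.1, hAB.2] at hpp hnn
          simp at hpp hnn; linarith
        simp [this]
      · have hd : 0 < Al ^ 2 + Bl ^ 2 := by
          rcases not_and_or.1 hAB with h | h
          · have : 0 < Al ^ 2 := by positivity
            nlinarith [sq_nonneg Bl]
          · have : 0 < Bl ^ 2 := by positivity
            nlinarith [sq_nonneg Al]
        set d := Al ^ 2 + Bl ^ 2 with hdd
        set x01 : ℝ := -Al * Cl / d with hx01
        set x02 : ℝ := -Bl * Cl / d with hx02
        set a' : Fin n → ℝ := fun k => Fin.init A k * (-Bl) + Fin.init B k * Al with ha'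
        set b' : Fin n → ℝ := fun k => Fin.init A k * x01 + Fin.init B k * x02 + Fin.init C k
          with hb'
        have hsub2 : Tp ∩ Tn ⊆ Feas1 a' b' := by
          intro τ hτ
          obtain ⟨xp, hpat_p, hpp⟩ := mem_image_pos2 (Finset.mem_of_mem_inter_left hτ)
          obtain ⟨xn, hpat_n, hnn⟩ := mem_image_pos2 (Finset.mem_of_mem_inter_right hτ)
          simp only [if_true, Bool.false_eq_true, if_false] at hpp hnn
          obtain ⟨x, hx, hzero⟩ := split2 hpat_p hpat_n hpp hnn
          rw [← hAl, ← hBl, ← hCl] at hzero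
          set t : ℝ := (Al * (x.2 - x02) - Bl * (x.1 - x01)) / d with ht
          have hne : d ≠ 0 := ne_of_gt hd
          have h1 : x01 + t * (-Bl) = x.1 := by
            rw [ht, hx01, hx02, hdd]
            have hne' : Al ^ 2 + Bl ^ 2 ≠ 0 := by rw [← hdd]; exact hne
            field_simp
            linear_combination (-Al) * (Al ^ 2 + Bl ^ 2) * hzero
          have h2 : x02 + t * Al = x.2 := by
            rw [ht, hx01, hx02, hdd]
            have hne' : Al ^ 2 + Bl ^ 2 ≠ 0 := by rw [← hdd]; exact hne
            field_simp
            linear_combination (-Bl) * (Al ^ 2 + Bl ^ 2) * hzero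
          apply mem_Feas1.2
          refine ⟨t, ?_⟩
          intro k
          have hval : a' k * t + b' k
              = Fin.init A k * x.1 + Fin.init B k * x.2 + Fin.init C k := by
            rw [← h1, ← h2, ha', hb']; ring
          have := hx k
          cases e : τ k <;> simp only [e] at this ⊢ <;> simpa [hval] using this
        calc (Tp ∩ Tn).card ≤ (Feas1 a' b').card := Finset.card_le_card hsub2
        _ ≤ n + 1 := feas1_card a' b'
    have hu : (Tp ∪ Tn).card ≤ n * (n - 1) / 2 + n + 1 :=
      le_trans (Finset.card_le_card hsub) (ih (Fin.init A) (Fin.init B) (Fin.init C))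
    have hcui : Tp.card + Tn.card = (Tp ∪ Tn).card + (Tp ∩ Tn).card :=
      (Finset.card_union_add_card_inter Tp Tn).symm
    have := tri_step n
    simp only [Nat.add_sub_cancel]
    omega

/-- The cell of a sign pattern is convex. -/
lemma cell_convex {m : ℕ} (A B C : Fin m → ℝ) (σ : Fin m → Bool) :
    Convex ℝ {y : ℝ × ℝ | Pat2 A B C σ y} := by
  intro x hx y hy a b ha hb hab
  have hb1 : b = 1 - a := by linarith
  have ha1 : a ≤ 1 := by linarith
  have hxy : a • x + b • y = (a * x.1 + (1 - a) * y.1, a * x.2 + (1 - a) * y.2) := by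
    rw [hb1, Prod.ext_iff]
    simp [Prod.fst_add, Prod.snd_add, Prod.smul_fst, Prod.smul_snd]
  show Pat2 A B C σ (a • x + b • y)
  rw [hxy]
  exact pat2_interp hx hy ha ha1

end Stmt11

open Stmt11 in
theorem stmt11 (N : ℕ) (L : Fin N → Set (ℝ × ℝ))
    (hL : ∀ k : Fin N, ∃ x₀ v : ℝ × ℝ, v ≠ 0 ∧ L k = {y | ∃ t : ℝ, y = x₀ + t • v}) :
    Cardinal.mk (ConnectedComponents ↥((⋃ k : Fin N, L k)ᶜ))
      ≤ ((N * (N - 1) / 2 + N + 1 : ℕ) : Cardinal) := by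
  classical
  choose x₀ v hv hLeq using hL
  set A : Fin N → ℝ := fun k => (v k).2 with hA
  set B : Fin N → ℝ := fun k => -(v k).1 with hB
  set C : Fin N → ℝ := fun k => (v k).1 * (x₀ k).2 - (v k).2 * (x₀ k).1 with hC
  set f : Fin N → (ℝ × ℝ) → ℝ := fun k y => A k * y.1 + B k * y.2 + C k with hf
  -- each line is the zero set of f k
  have hline : ∀ k, L k = {y : ℝ × ℝ | f k y = 0} := by
    intro k
    rw [hLeq k]
    ext y
    simp only [Set.mem_setOf_eq, hf, hA, hB, hC]
    constructor
    · rintro ⟨t, rfl⟩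
      simp only [Prod.fst_add, Prod.snd_add, Prod.smul_fst, Prod.smul_snd, smul_eq_mul]
      ring
    · intro h
      have hv1 : (v k).1 ≠ 0 ∨ (v k).2 ≠ 0 := by
        by_contra hc
        push_neg at hc
        exact hv k (Prod.ext hc.1 hc.2)
      rcases hv1 with h1 | h2
      · refine ⟨(y.1 - (x₀ k).1) / (v k).1, ?_⟩
        rw [Prod.ext_iff]
        simp only [Prod.fst_add, Prod.snd_add, Prod.smul_fst, Prod.smul_snd, smul_eq_mul]
        constructor
        · field_simp
          ring
        · field_simp
          linear_combination -h
      · refine ⟨(y.2 - (x₀ k).2) / (v k).2, ?_⟩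
        rw [Prod.ext_iff]
        simp only [Prod.fst_add, Prod.snd_add, Prod.smul_fst, Prod.smul_snd, smul_eq_mul]
        constructor
        · field_simp
          linear_combination h
        · field_simp
          ring
      
  set S : Set (ℝ × ℝ) := (⋃ k : Fin N, L k)ᶜ with hS
  have hmemS : ∀ y : ℝ × ℝ, y ∈ S ↔ ∀ k, f k y ≠ 0 := by
    intro y
    simp only [hS, Set.mem_compl_iff, Set.mem_iUnion, not_exists]
    constructor
    · intro h k hk
      exact h k (by rw [hline k]; exact hk)
    · intro h k hk
      exact h k (by rwa [hline k] at hk)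
  have hmemS' : ∀ y : ℝ × ℝ, (∀ k, f k y ≠ 0) → y ∈ S := fun y h => (hmemS y).2 h
  -- a pattern point is in S
  have hpatS : ∀ (σ : Fin N → Bool) (y : ℝ × ℝ), Pat2 A B C σ y → y ∈ S := by
    intro σ y hy
    apply hmemS'
    intro k
    have := hy k
    cases e : σ k <;> simp only [e, if_true, Bool.false_eq_true, if_false] at this <;>
      simp only [hf] <;> intro hzz <;> rw [hzz] at this <;> simp at this
  -- two points with the same pattern lie in the same component
  have hsame : ∀ (σ : Fin N → Bool) (x y : ↥S), Pat2 A B C σ x.val → Pat2 A B C σ y.val →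
      (ConnectedComponents.mk x : ConnectedComponents ↥S) = ConnectedComponents.mk y := by
    intro σ x y hx hy
    set cell : Set (ℝ × ℝ) := {y : ℝ × ℝ | Pat2 A B C σ y} with hcell
    have hcsub : cell ⊆ S := fun z hz => hpatS σ z hz
    have himg : (Subtype.val : ↥S → ℝ × ℝ) '' (Subtype.val ⁻¹' cell) = cell := by
      rw [Subtype.image_preimage_coe]
      exact Set.inter_eq_right.2 hcsub
    have hpre : IsPreconnected ((Subtype.val : ↥S → ℝ × ℝ) ⁻¹' cell) := by
      apply Topology.IsInducing.subtypeVal.isPreconnected_image.mp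
      rw [himg]
      exact (cell_convex A B C σ).isPreconnected
    have hxc : x ∈ (Subtype.val : ↥S → ℝ × ℝ) ⁻¹' cell := hx
    have hyc : y ∈ (Subtype.val : ↥S → ℝ × ℝ) ⁻¹' cell := hy
    have := hpre.subset_connectedComponent hxc
    exact (ConnectedComponents.coe_eq_coe' ).2 (this hyc) |>.symm
  -- surjection from feasible patterns onto components
  have hwit : ∀ σ : {σ // σ ∈ Feas2 A B C}, ∃ y : ↥S, Pat2 A B C σ.val y.val := by
    rintro ⟨σ, hσ⟩
    obtain ⟨y, hy⟩ := mem_Feas2.1 hσ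
    exact ⟨⟨y, hpatS σ y hy⟩, hy⟩
  choose w hw using hwit
  have hsurj : Function.Surjective
      (fun σ : {σ // σ ∈ Feas2 A B C} => (ConnectedComponents.mk (w σ) :
        ConnectedComponents ↥S)) := by
    intro c
    obtain ⟨x, rfl⟩ := ConnectedComponents.surjective_coe c
    set σ : Fin N → Bool := fun k => if 0 < f k x.val then true else false with hσdef
    have hxS : ∀ k, f k x.val ≠ 0 := (hmemS x.val).1 x.property
    have hpat : Pat2 A B C σ x.val := by
      intro k
      by_cases h : 0 < f k x.val
      · have h' : σ k = true := by simp [hσdef, h]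
        simp only [h', if_true]
        simpa [hf] using h
      · have h' : σ k = false := by simp [hσdef, h]
        simp only [h', Bool.false_eq_true, if_false]
        have hne := hxS k
        simp only [hf] at hne h ⊢
        push_neg at h
        exact lt_of_le_of_ne h hne
    have hσF : σ ∈ Feas2 A B C := mem_Feas2.2 ⟨x.val, hpat⟩
    exact ⟨⟨σ, hσF⟩, hsame σ (w ⟨σ, hσF⟩) x (hw ⟨σ, hσF⟩) hpat⟩
  calc Cardinal.mk (ConnectedComponents ↥S)
      ≤ Cardinal.mk {σ // σ ∈ Feas2 A B C} := Cardinal.mk_le_of_surjective hsurj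
    _ = ((Feas2 A B C).card : Cardinal) := by
        rw [Cardinal.mk_fintype, Fintype.card_coe]
    _ ≤ ((N * (N - 1) / 2 + N + 1 : ℕ) : Cardinal) := Nat.cast_le.2 (feas2_card A B C)
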